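/- Let d ∈ ℕ, η > 0, M ≥ 0, B ≥ 0 and β ∈ (0,1]. Let F : ℝ^d → ℝ^d satisfy ‖F(x) − F(y)‖ ≤ M·‖x − y‖^β for all x, y ∈ ℝ^d and ‖F(0)‖ ≤ B. Let θ : [0, η] → ℝ^d be bounded and measurable, and let ℓ : [0, η] → ℝ^d be bounded with ℓ(0) = 0, such that θ(t) = θ(0) + ∫_0^t F(θ(u)) du + ℓ(t) for every t ∈ [0, η]. Then for every t ∈ [0, η], ‖θ(t) − θ(0)‖ ≤ e^{M·η}·( η·(M·‖θ(0)‖^β + B + M) + sup_{s∈[0,η]} ‖ℓ(s)‖ ). -/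

import Mathlib

open MeasureTheory

lemma aux_rpow_le_add_one {a β : ℝ} (ha : 0 ≤ a) (hβ0 : 0 < β) (hβ1 : β ≤ 1) :
    a ^ β ≤ a + 1 := by
  rcases le_total a 1 with h | h
  · have : a ^ β ≤ 1 := Real.rpow_le_one ha h hβ0.le
    linarith
  · have : a ^ β ≤ a ^ (1 : ℝ) := Real.rpow_le_rpow_of_exponent_le h hβ1
    rw [Real.rpow_one] at this
    linarith

lemma aux_intInt {E : Type*} [NormedAddCommGroup E] {η t : ℝ} (ht : t ∈ Set.Icc (0:ℝ) η)
    {f : ℝ → E} {K : ℝ}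
    (hm : AEStronglyMeasurable f (volume.restrict (Set.Icc (0 : ℝ) η)))
    (hb : ∀ u ∈ Set.Icc (0:ℝ) η, ‖f u‖ ≤ K) :
    IntervalIntegrable f volume 0 t := by
  rw [intervalIntegrable_iff, Set.uIoc_of_le ht.1]
  have hsub : Set.Ioc (0:ℝ) t ⊆ Set.Icc (0:ℝ) η :=
    Set.Ioc_subset_Icc_self.trans (Set.Icc_subset_Icc_right ht.2)
  refine Integrable.mono' (integrable_const K)
    (hm.mono_measure (Measure.restrict_mono hsub le_rfl)) ?_
  exact (ae_restrict_iff' measurableSet_Ioc).mpr (ae_of_all _ fun u hu => hb u (hsub hu))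

lemma aux_hterm (M t : ℝ) (k : ℕ) :
    (M * t) ^ (k + 1) / ((k + 1).factorial : ℝ)
      = M * ((M ^ k / (k.factorial : ℝ)) * (t ^ (k + 1) / ((k : ℝ) + 1))) := by
  have h1 : ((k : ℝ) + 1) ≠ 0 := by positivity
  have h2 : ((k.factorial : ℝ)) ≠ 0 := Nat.cast_ne_zero.mpr k.factorial_ne_zero
  rw [mul_pow, Nat.factorial_succ]
  push_cast
  field_simp
  ring

/-- Pathwise Gronwall estimate for the Lévy-driven dynamics (deviation over one step
interval): if `θ(t) = θ(0) + ∫₀ᵗ F(θ(u)) du + ℓ(t)` on `[0,η]` with `F` `(M,β)`-Hölder,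
`‖F(0)‖ ≤ B`, `θ` bounded measurable and `ℓ` bounded with `ℓ(0)=0`, then for `t ∈ [0,η]`,
`‖θ(t)-θ(0)‖ ≤ e^{Mη}(η(M‖θ(0)‖^β + B + M) + sup_{s∈[0,η]}‖ℓ(s)‖)`. -/
theorem stmt15 (d : ℕ) (η M B β : ℝ) (hη : 0 < η) (hM : 0 ≤ M) (hB : 0 ≤ B)
    (hβ : β ∈ Set.Ioc (0 : ℝ) 1)
    (F : EuclideanSpace ℝ (Fin d) → EuclideanSpace ℝ (Fin d))
    (hF : ∀ x y, ‖F x - F y‖ ≤ M * ‖x - y‖ ^ β) (hF0 : ‖F 0‖ ≤ B)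
    (θ : ℝ → EuclideanSpace ℝ (Fin d))
    (hθm : AEStronglyMeasurable θ (volume.restrict (Set.Icc (0 : ℝ) η)))
    (hθb : ∃ Cθ, ∀ t ∈ Set.Icc (0 : ℝ) η, ‖θ t‖ ≤ Cθ)
    (ℓ : ℝ → EuclideanSpace ℝ (Fin d))
    (hℓb : ∃ Cℓ, ∀ s ∈ Set.Icc (0 : ℝ) η, ‖ℓ s‖ ≤ Cℓ)
    (hℓ0 : ℓ 0 = 0)
    (hint : ∀ t ∈ Set.Icc (0 : ℝ) η, θ t = θ 0 + (∫ u in (0 : ℝ)..t, F (θ u)) + ℓ t) :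
    ∀ t ∈ Set.Icc (0 : ℝ) η,
      ‖θ t - θ 0‖ ≤ Real.exp (M * η) *
        (η * (M * ‖θ 0‖ ^ β + B + M) + ⨆ s : Set.Icc (0 : ℝ) η, ‖ℓ (s : ℝ)‖) := by
  obtain ⟨hβ0, hβ1⟩ := hβ
  obtain ⟨Cθ, hCθ⟩ := hθb
  obtain ⟨Cℓ, hCℓ⟩ := hℓb
  have h0mem : (0:ℝ) ∈ Set.Icc (0:ℝ) η := ⟨le_refl 0, hη.le⟩
  -- continuity of F
  have hFc : Continuous F := by
    rw [continuous_iff_continuousAt]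
    intro x
    rw [ContinuousAt, tendsto_iff_norm_sub_tendsto_zero]
    apply squeeze_zero (fun y => norm_nonneg _) (fun y => hF y x)
    have h1 : Filter.Tendsto (fun y : EuclideanSpace ℝ (Fin d) => ‖y - x‖) (nhds x) (nhds 0) := by
      have := ((continuous_id.sub (continuous_const (y := x))).norm).tendsto x
      simpa using this
    have h2 : ContinuousAt (fun a : ℝ => a ^ β) 0 :=
      Real.continuousAt_rpow_const 0 β (Or.inr hβ0.le)
    have h3 := (h2.tendsto.comp h1).const_mul M
    rw [Real.zero_rpow hβ0.ne', mul_zero] at h3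
    exact h3
  -- constants
  set C : ℝ := M * ‖θ 0‖ ^ β + B + M with hC_def
  have hC0 : 0 ≤ C := by positivity
  set L : ℝ := ⨆ s : Set.Icc (0:ℝ) η, ‖ℓ (s:ℝ)‖ with hL_def
  have hbdd : BddAbove (Set.range fun s : Set.Icc (0:ℝ) η => ‖ℓ (s:ℝ)‖) :=
    ⟨Cℓ, by rintro _ ⟨s, rfl⟩; exact hCℓ s s.2⟩
  have hLle : ∀ s ∈ Set.Icc (0:ℝ) η, ‖ℓ s‖ ≤ L := fun s hs =>
    le_ciSup hbdd (⟨s, hs⟩ : Set.Icc (0:ℝ) η)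
  have hL0 : 0 ≤ L := by
    have := hLle 0 h0mem
    rw [hℓ0] at this
    simpa using this
  set A : ℝ := η * C + L with hA_def
  have hA0 : 0 ≤ A := add_nonneg (mul_nonneg hη.le hC0) hL0
  set G : ℝ := Cθ + ‖θ 0‖ with hG_def
  have hgG : ∀ u ∈ Set.Icc (0:ℝ) η, ‖θ u - θ 0‖ ≤ G := fun u hu =>
    (norm_sub_le _ _).trans (add_le_add_left (hCθ u hu) _)
  have hG0 : 0 ≤ G := le_trans (norm_nonneg _) (hgG 0 h0mem)
  -- pointwise bound on F ∘ θ
  have hFb : ∀ u ∈ Set.Icc (0:ℝ) η, ‖F (θ u)‖ ≤ M * ‖θ u - θ 0‖ + C := by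
    intro u hu
    have e1 : ‖F (θ u)‖ ≤ ‖F (θ u) - F (θ 0)‖ + ‖F (θ 0) - F 0‖ + ‖F 0‖ := by
      have h : F (θ u) = (F (θ u) - F (θ 0)) + (F (θ 0) - F 0) + F 0 := by abel
      nth_rewrite 1 [h]
      exact (norm_add_le _ _).trans (add_le_add_left (norm_add_le _ _) _)
    have e2 : ‖F (θ u) - F (θ 0)‖ ≤ M * (‖θ u - θ 0‖ + 1) := by
      refine (hF _ _).trans (mul_le_mul_of_nonneg_left ?_ hM)
      exact aux_rpow_le_add_one (norm_nonneg _) hβ0 hβ1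
    have e3 : ‖F (θ 0) - F 0‖ ≤ M * ‖θ 0‖ ^ β := by
      have := hF (θ 0) 0
      rwa [sub_zero] at this
    have := e1.trans (add_le_add (add_le_add e2 e3) hF0)
    rw [hC_def]
    linarith
  -- measurability and integrability
  have hgm : AEStronglyMeasurable (fun u => ‖θ u - θ 0‖)
      (volume.restrict (Set.Icc (0:ℝ) η)) :=
    (hθm.sub aestronglyMeasurable_const).norm
  have hFθm : AEStronglyMeasurable (fun u => F (θ u))
      (volume.restrict (Set.Icc (0:ℝ) η)) :=
    hFc.comp_aestronglyMeasurable hθm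
  have hgGn : ∀ u ∈ Set.Icc (0:ℝ) η, ‖‖θ u - θ 0‖‖ ≤ G := fun u hu => by
    rw [Real.norm_eq_abs, abs_of_nonneg (norm_nonneg _)]
    exact hgG u hu
  have hgInt : ∀ t ∈ Set.Icc (0:ℝ) η,
      IntervalIntegrable (fun u => ‖θ u - θ 0‖) volume 0 t :=
    fun t ht => aux_intInt ht hgm hgGn
  have hFInt : ∀ t ∈ Set.Icc (0:ℝ) η,
      IntervalIntegrable (fun u => F (θ u)) volume 0 t :=
    fun t ht => aux_intInt (K := M * G + C) ht hFθm (fun u hu => (hFb u hu).trans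
      (by nlinarith [hgG u hu]))
  -- key Gronwall-type integral inequality
  have key : ∀ t ∈ Set.Icc (0:ℝ) η,
      ‖θ t - θ 0‖ ≤ A + M * ∫ u in (0:ℝ)..t, ‖θ u - θ 0‖ := by
    intro t ht
    have h0 : θ t - θ 0 = (∫ u in (0:ℝ)..t, F (θ u)) + ℓ t := by
      rw [hint t ht]; abel
    have n1 : ‖θ t - θ 0‖ ≤ ‖∫ u in (0:ℝ)..t, F (θ u)‖ + ‖ℓ t‖ := by
      rw [h0]; exact norm_add_le _ _
    have n2 : ‖∫ u in (0:ℝ)..t, F (θ u)‖ ≤ ∫ u in (0:ℝ)..t, ‖F (θ u)‖ :=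
      intervalIntegral.norm_integral_le_integral_norm ht.1
    have n3 : (∫ u in (0:ℝ)..t, ‖F (θ u)‖)
        ≤ ∫ u in (0:ℝ)..t, (M * ‖θ u - θ 0‖ + C) := by
      refine intervalIntegral.integral_mono_on ht.1 ((hFInt t ht).norm)
        (((hgInt t ht).const_mul M).add (intervalIntegrable_const)) ?_
      intro u hu
      exact hFb u ⟨hu.1, hu.2.trans ht.2⟩
    have n4 : (∫ u in (0:ℝ)..t, (M * ‖θ u - θ 0‖ + C))
        = M * (∫ u in (0:ℝ)..t, ‖θ u - θ 0‖) + t * C := by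
      rw [intervalIntegral.integral_add ((hgInt t ht).const_mul M) intervalIntegrable_const,
        intervalIntegral.integral_const_mul, intervalIntegral.integral_const]
      simp [smul_eq_mul]
    have n5 : t * C ≤ η * C := mul_le_mul_of_nonneg_right ht.2 hC0
    have n6 : ‖ℓ t‖ ≤ L := hLle t ht
    rw [hA_def]
    linarith [n1, n2.trans (n3.trans_eq n4)]
  -- main induction
  have main : ∀ n : ℕ, ∀ t ∈ Set.Icc (0:ℝ) η,
      ‖θ t - θ 0‖ ≤ A * (∑ k ∈ Finset.range n, (M*t)^k / (k.factorial : ℝ))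
        + G * ((M*t)^n / (n.factorial : ℝ)) := by
    intro n
    induction n with
    | zero => intro t ht; simpa using hgG t ht
    | succ n ih =>
      intro t ht
      have hP : ∀ k : ℕ, Continuous (fun u : ℝ => (M^k / (k.factorial : ℝ)) * u ^ k) :=
        fun k => continuous_const.mul (continuous_pow k)
      have hPc : Continuous (fun u : ℝ =>
          A * (∑ k ∈ Finset.range n, (M^k / (k.factorial : ℝ)) * u ^ k)
            + (G * (M^n / (n.factorial : ℝ))) * u ^ n) := by
        apply Continuous.add
        · exact continuous_const.mul (continuous_finset_sum _ fun k _ => hP k)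
        · exact continuous_const.mul (continuous_pow n)
      have h1 : ∀ u ∈ Set.Icc (0:ℝ) t, ‖θ u - θ 0‖
          ≤ A * (∑ k ∈ Finset.range n, (M^k / (k.factorial : ℝ)) * u ^ k)
            + (G * (M^n / (n.factorial : ℝ))) * u ^ n := by
        intro u hu
        have := ih u ⟨hu.1, hu.2.trans ht.2⟩
        refine this.trans (le_of_eq ?_)
        rw [Finset.mul_sum, Finset.mul_sum]
        congr 1
        · exact Finset.sum_congr rfl fun k _ => by rw [mul_pow]; ring
        · rw [mul_pow]; ring
      have h2 : (∫ u in (0:ℝ)..t, ‖θ u - θ 0‖)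
          ≤ ∫ u in (0:ℝ)..t,
            (A * (∑ k ∈ Finset.range n, (M^k / (k.factorial : ℝ)) * u ^ k)
              + (G * (M^n / (n.factorial : ℝ))) * u ^ n) :=
        intervalIntegral.integral_mono_on ht.1 (hgInt t ht)
          (hPc.intervalIntegrable _ _) h1
      have e1 : ∀ c : ℝ, ∀ k : ℕ, (∫ u in (0:ℝ)..t, c * u ^ k)
          = c * (t^(k+1) / ((k:ℝ)+1)) := by
        intro c k
        rw [intervalIntegral.integral_const_mul, integral_pow,
          zero_pow (Nat.succ_ne_zero k), sub_zero]
      have h3 : (∫ u in (0:ℝ)..t,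
            (A * (∑ k ∈ Finset.range n, (M^k / (k.factorial : ℝ)) * u ^ k)
              + (G * (M^n / (n.factorial : ℝ))) * u ^ n))
          = A * (∑ k ∈ Finset.range n, (M^k / (k.factorial : ℝ)) * (t^(k+1) / ((k:ℝ)+1)))
            + (G * (M^n / (n.factorial : ℝ))) * (t^(n+1) / ((n:ℝ)+1)) := by
        rw [intervalIntegral.integral_add
            (f := fun u : ℝ => A * (∑ k ∈ Finset.range n, (M^k / (k.factorial : ℝ)) * u ^ k))
            (g := fun u : ℝ => (G * (M^n / (n.factorial : ℝ))) * u ^ n)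
            ((continuous_const.mul (continuous_finset_sum _ fun k _ => hP k)).intervalIntegrable _ _)
            ((continuous_const.mul (continuous_pow n)).intervalIntegrable _ _),
          intervalIntegral.integral_const_mul,
          intervalIntegral.integral_finset_sum (fun k _ => (hP k).intervalIntegrable _ _)]
        simp only [e1]
      have hsum : (∑ k ∈ Finset.range n, (M*t)^(k+1) / (((k+1).factorial : ℝ)))
          = M * ∑ k ∈ Finset.range n, (M^k / (k.factorial : ℝ)) * (t^(k+1) / ((k:ℝ)+1)) := by
        rw [Finset.mul_sum]
        exact Finset.sum_congr rfl fun k _ => aux_hterm M t k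
      calc ‖θ t - θ 0‖ ≤ A + M * ∫ u in (0:ℝ)..t, ‖θ u - θ 0‖ := key t ht
        _ ≤ A + M * ∫ u in (0:ℝ)..t,
            (A * (∑ k ∈ Finset.range n, (M^k / (k.factorial : ℝ)) * u ^ k)
              + (G * (M^n / (n.factorial : ℝ))) * u ^ n) :=
            add_le_add_right (mul_le_mul_of_nonneg_left h2 hM) A
        _ = A * (∑ k ∈ Finset.range (n+1), (M*t)^k / (k.factorial : ℝ))
            + G * ((M*t)^(n+1) / ((n+1).factorial : ℝ)) := by
            rw [h3, Finset.sum_range_succ', hsum, aux_hterm M t n]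
            simp only [pow_zero, Nat.factorial_zero, Nat.cast_one, div_one]
            ring
  -- pass to the limit
  intro t ht
  have hs : HasSum (fun n : ℕ => (M*t)^n / (n.factorial : ℝ)) (Real.exp (M*t)) := by
    have h := (Real.summable_pow_div_factorial (M*t)).hasSum
    have : (∑' n : ℕ, (M*t)^n / (n.factorial : ℝ)) = Real.exp (M*t) := by
      rw [Real.exp_eq_exp_ℝ, NormedSpace.exp_eq_tsum_div]
    rwa [this] at h
  have hlim : Filter.Tendsto (fun n : ℕ =>
      A * (∑ k ∈ Finset.range n, (M*t)^k / (k.factorial : ℝ))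
        + G * ((M*t)^n / (n.factorial : ℝ))) Filter.atTop
      (nhds (A * Real.exp (M*t) + G * 0)) := by
    exact (hs.tendsto_sum_nat.const_mul A).add
      ((FloorSemiring.tendsto_pow_div_factorial_atTop (M*t)).const_mul G)
  have hle : ‖θ t - θ 0‖ ≤ A * Real.exp (M*t) + G * 0 :=
    ge_of_tendsto' hlim (fun n => main n t ht)
  calc ‖θ t - θ 0‖ ≤ A * Real.exp (M*t) + G * 0 := hle
    _ = Real.exp (M*t) * A := by ring
    _ ≤ Real.exp (M*η) * A := by
        have hmt : M*t ≤ M*η := mul_le_mul_of_nonneg_left ht.2 hM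
        exact mul_le_mul_of_nonneg_right (Real.exp_le_exp.mpr hmt) hA0
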